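/- For m ≥ 5, let A'_m be the m × (m−4) real matrix (rows indexed 1,…,m, columns indexed 1,…,m−4) whose column j has entries 2, −7, 7, −2 in rows j+1, j+2, j+3, j+4 respectively, and 0 elsewhere. Then for every integer t, the vector λ ∈ ℝ^m with λ_i = (2^(i−t) − 1)·(1 − 2^(t+1−i)) (integer powers of 2 in ℝ) satisfies λᵀ · A'_m = 0; i.e., λ describes a linear dependence among the rows of A'_m. -/

import Mathlib

lemma key16 (t k : ℤ) :
  2 * (((2:ℝ)^(k+2-t) - 1) * (1 - 2^(t+1-(k+2))))
  - 7*(((2:ℝ)^(k+3-t)-1)*(1-2^(t+1-(k+3))))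
  + 7*(((2:ℝ)^(k+4-t)-1)*(1-2^(t+1-(k+4))))
  - 2*(((2:ℝ)^(k+5-t)-1)*(1-2^(t+1-(k+5)))) = 0 := by
  have h2 : (2:ℝ) ≠ 0 := two_ne_zero
  rw [show k+2-t = (k-t)+2 by ring, show k+3-t = (k-t)+3 by ring,
      show k+4-t = (k-t)+4 by ring, show k+5-t = (k-t)+5 by ring,
      show t+1-(k+2) = (t-k)+(-1) by ring, show t+1-(k+3) = (t-k)+(-2) by ring,
      show t+1-(k+4) = (t-k)+(-3) by ring, show t+1-(k+5) = (t-k)+(-4) by ring]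
  simp only [zpow_add₀ h2]
  norm_num
  ring


/-- The `m × (m-4)` matrix `A'_m` (here with 0-based indices: 1-based row `i`
and column `j` correspond to `i - 1 : Fin m` and `j - 1 : Fin (m-4)`), whose
1-based column `j` has entries `2, -7, 7, -2` in rows `j+1, j+2, j+3, j+4` and
`0` elsewhere. -/
def matrixA (m : ℕ) : Matrix (Fin m) (Fin (m - 4)) ℝ := fun i j =>
  if (i : ℕ) = (j : ℕ) + 1 then 2
  else if (i : ℕ) = (j : ℕ) + 2 then -7
  else if (i : ℕ) = (j : ℕ) + 3 then 7
  else if (i : ℕ) = (j : ℕ) + 4 then -2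
  else 0

/-- For `m ≥ 5` and every integer `t`, the vector `λ` with 1-based entries
`λ_i = (2^(i-t) - 1)(1 - 2^(t+1-i))` (integer powers of `2` in `ℝ`) lies in the
left kernel of `A'_m`: it describes a linear dependence among the rows of `A'_m`. -/
theorem stmt_16 (m : ℕ) (hm : 5 ≤ m) (t : ℤ) :
    Matrix.vecMul
      (fun i : Fin m =>
        ((2 : ℝ) ^ (((i : ℕ) : ℤ) + 1 - t) - 1) *
          (1 - (2 : ℝ) ^ (t + 1 - (((i : ℕ) : ℤ) + 1))))
      (matrixA m) = 0 := by
  funext j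
  have hj : (j : ℕ) < m - 4 := j.isLt
  set v : Fin m → ℝ := fun i =>
    ((2 : ℝ) ^ (((i : ℕ) : ℤ) + 1 - t) - 1) *
      (1 - (2 : ℝ) ^ (t + 1 - (((i : ℕ) : ℤ) + 1))) with hv
  have h1 : (j:ℕ) + 1 < m := by omega
  have h2 : (j:ℕ) + 2 < m := by omega
  have h3 : (j:ℕ) + 3 < m := by omega
  have h4 : (j:ℕ) + 4 < m := by omega
  set a : Fin m := ⟨(j:ℕ)+1, h1⟩
  set b : Fin m := ⟨(j:ℕ)+2, h2⟩
  set c : Fin m := ⟨(j:ℕ)+3, h3⟩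
  set d : Fin m := ⟨(j:ℕ)+4, h4⟩
  have split : ∀ i : Fin m, v i * matrixA m i j =
      (if i = a then 2 * v a else 0) + (if i = b then -7 * v b else 0)
      + (if i = c then 7 * v c else 0) + (if i = d then -2 * v d else 0) := by
    intro i
    simp only [matrixA, Fin.ext_iff]
    rcases eq_or_ne (i:ℕ) ((j:ℕ)+1) with h | h <;>
    rcases eq_or_ne (i:ℕ) ((j:ℕ)+2) with h' | h' <;>
    rcases eq_or_ne (i:ℕ) ((j:ℕ)+3) with h'' | h'' <;>
    rcases eq_or_ne (i:ℕ) ((j:ℕ)+4) with h''' | h''' <;>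
      simp_all [Fin.ext_iff, a, b, c, d] <;> first | omega | ring
  show ∑ i, v i * matrixA m i j = 0
  rw [Finset.sum_congr rfl (fun i _ => split i)]
  simp only [Finset.sum_add_distrib, Finset.sum_ite_eq', Finset.mem_univ, if_true]
  simp only [hv, a, b, c, d]
  push_cast
  rw [show ((j:ℕ):ℤ)+1+1-t = ((j:ℕ):ℤ)+2-t from by ring,
      show ((j:ℕ):ℤ)+2+1-t = ((j:ℕ):ℤ)+3-t from by ring,
      show ((j:ℕ):ℤ)+3+1-t = ((j:ℕ):ℤ)+4-t from by ring,
      show ((j:ℕ):ℤ)+4+1-t = ((j:ℕ):ℤ)+5-t from by ring,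
      show t+1-(((j:ℕ):ℤ)+1+1) = t+1-(((j:ℕ):ℤ)+2) from by ring,
      show t+1-(((j:ℕ):ℤ)+2+1) = t+1-(((j:ℕ):ℤ)+3) from by ring,
      show t+1-(((j:ℕ):ℤ)+3+1) = t+1-(((j:ℕ):ℤ)+4) from by ring,
      show t+1-(((j:ℕ):ℤ)+4+1) = t+1-(((j:ℕ):ℤ)+5) from by ring]
  linear_combination key16 t ((j:ℕ):ℤ)
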